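/- arXiv:1912.05655 — 4 statements merged into one kernel-verified Lean document; each statement's English description precedes it below -/
import Mathlib

section
/- For integers M ≥ 1, a discriminant Δ, and a positive divisor t of M, the map Q = [a,b,c] ↦ Q_t := [a t^2, b t, c] yields a bijection from Q_{M/t}(Δ) onto Q_{Mt}(Δ t^2). -/
/-- `QM M Δ` is the set of integral binary quadratic forms `[a,b,c]` of
discriminant `Δ` with `M ∣ a`. -/
def QM (M Δ : ℤ) : Set (ℤ × ℤ × ℤ) :=
  {q | q.2.1^2 - 4 * q.1 * q.2.2 = Δ ∧ M ∣ q.1}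

/-- For `M ≥ 1`, a discriminant `Δ` and a positive divisor `t` of `M`, the map
`[a,b,c] ↦ [a t², b t, c]` is a bijection from `Q_{M/t}(Δ)` onto `Q_{Mt}(Δ t²)`. -/
theorem stmt1 (M t Δ : ℤ) (hM : 1 ≤ M) (ht : 0 < t) (htM : t ∣ M) :
    Set.BijOn (fun q : ℤ × ℤ × ℤ => (q.1 * t^2, q.2.1 * t, q.2.2))
      (QM (M / t) Δ) (QM (M * t) (Δ * t^2)) := by
  have htne : t ≠ 0 := ht.ne'
  have hMeq : M / t * t = M := Int.ediv_mul_cancel htM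
  refine ⟨?_, ?_, ?_⟩
  · rintro ⟨a, b, c⟩ ⟨hd, k, hk⟩
    refine ⟨?_, k, ?_⟩
    · simp only [QM, Set.mem_setOf_eq] at hd ⊢
      ring_nf
      ring_nf at hd
      nlinarith [hd]
    · simp only at hk ⊢
      linear_combination t^2 * hk + t * k * hMeq
  · rintro ⟨a, b, c⟩ ⟨hd, ha⟩ ⟨a', b', c'⟩ ⟨hd', ha'⟩ h
    simp only [Prod.mk.injEq] at h
    obtain ⟨h1, h2, h3⟩ := h
    have : a = a' := by
      have := mul_right_cancel₀ (pow_ne_zero 2 htne) h1; exact this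
    have : b = b' := mul_right_cancel₀ htne h2
    simp_all
  · rintro ⟨A, B, C⟩ ⟨hd, hA⟩
    have ht2A : t ^ 2 ∣ A := by
      refine dvd_trans ?_ hA
      have : t * t ∣ M * t := mul_dvd_mul htM dvd_rfl
      simpa [sq] using this
    have htB : t ∣ B := by
      have : t ^ 2 ∣ B ^ 2 := by
        have : B ^ 2 = Δ * t ^ 2 + 4 * A * C := by
          simp only [QM, Set.mem_setOf_eq] at hd; linarith [hd]
        rw [this]
        exact dvd_add ⟨Δ, by ring⟩ ((ht2A.mul_left 4).mul_right C)
      exact (Int.pow_dvd_pow_iff two_ne_zero).mp this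
    obtain ⟨a, ha⟩ := ht2A
    obtain ⟨b, hb⟩ := htB
    refine ⟨(a, b, C), ⟨?_, ?_⟩, ?_⟩
    · simp only [QM, Set.mem_setOf_eq] at hd ⊢
      have h2 : (b ^ 2 - 4 * a * C) * t ^ 2 = Δ * t ^ 2 := by
        rw [← hd, ha, hb]; ring
      exact mul_right_cancel₀ (pow_ne_zero 2 htne) h2
    · obtain ⟨k, hk⟩ := hA
      simp only at hk
      have h4 : t ^ 2 * a = M * t * k := by rw [← ha, hk]
      have h3 : a * t ^ 2 = (M / t) * k * t ^ 2 := by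
        linear_combination h4 - t * k * hMeq
      exact ⟨k, mul_right_cancel₀ (pow_ne_zero 2 htne) h3⟩
    · simp only [Prod.mk.injEq]
      exact ⟨by rw [ha]; ring, by rw [hb]; ring, trivial⟩
end

section
/- Fix M ≥ 1 and a discriminant Δ, and let ϱ ∈ Z/2MZ satisfy ϱ^2 ≡ Δ (mod 4M). Then for every Γ_0(M)-primitive form Q = [aM, b, c] of discriminant Δ with b ≡ ϱ (mod 2M) and gcd(a,b,c) = 1, one has gcd(M, b, ac) = gcd(M, ϱ, (R^2 − Δ)/(4M)) where R is any integer representing ϱ. In particular the quantity m_ϱ := gcd(M, ϱ, (ϱ^2 − Δ)/(4M)) is well-defined (independent of the lift of ϱ modulo 2M) and equals gcd(M, b, ac) for any such form. -/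
lemma stmt7_aux (M Δ R R' : ℤ) (hM : M ≠ 0)
    (hR : (4 * M) ∣ (R^2 - Δ)) (h : (2 * M) ∣ (R - R')) :
    Int.gcd (Int.gcd M R : ℤ) ((R^2 - Δ) / (4 * M)) ∣
    Int.gcd (Int.gcd M R' : ℤ) ((R'^2 - Δ) / (4 * M)) := by
  obtain ⟨k, hk⟩ := h
  set X : ℤ := (R^2 - Δ) / (4 * M) with hX
  have h4M : (4 * M) ≠ 0 := by simp [hM]
  have hXeq : R^2 - Δ = 4 * M * X := (Int.ediv_mul_cancel hR).symm.trans (mul_comm _ _)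
  have hR'val : R' = R - 2 * M * k := by linarith [hk]
  have hX' : R'^2 - Δ = 4 * M * (X - k * R + M * k^2) := by
    rw [hR'val]; ring_nf; ring_nf at hXeq; linarith [hXeq]
  have hX'div : (R'^2 - Δ) / (4 * M) = X - k * R + M * k^2 := by
    rw [hX', Int.mul_ediv_cancel_left _ h4M]
  set d : ℤ := (Int.gcd (Int.gcd M R : ℤ) X : ℤ) with hd
  have hdM : d ∣ M := dvd_trans (Int.gcd_dvd_left _ _) (Int.gcd_dvd_left _ _)
  have hdR : d ∣ R := dvd_trans (Int.gcd_dvd_left _ _) (Int.gcd_dvd_right _ _)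
  have hdX : d ∣ X := Int.gcd_dvd_right _ _
  have hdR' : d ∣ R' := by rw [hR'val]; exact dvd_sub hdR (Dvd.dvd.mul_right (Dvd.dvd.mul_left hdM 2) k)
  have hdX' : d ∣ (R'^2 - Δ) / (4 * M) := by
    rw [hX'div]
    exact dvd_add (dvd_sub hdX (Dvd.dvd.mul_left hdR k)) (Dvd.dvd.mul_right hdM _)
  have : d ∣ (Int.gcd (Int.gcd M R' : ℤ) ((R'^2 - Δ) / (4 * M)) : ℤ) :=
    Int.dvd_coe_gcd (Int.dvd_coe_gcd hdM hdR') hdX'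
  rw [hd] at this; exact_mod_cast this

/-- For `Q = [aM, b, c]` of discriminant `Δ` with `b ≡ ϱ (mod 2M)` and
`gcd(a,b,c) = 1`, one has `gcd(M, b, ac) = gcd(M, R, (R² − Δ)/(4M))` for any
integer `R` lifting `ϱ`; in particular the invariant
`m_ϱ = gcd(M, ϱ, (ϱ² − Δ)/(4M))` is independent of the chosen lift of `ϱ`
modulo `2M` and equals `gcd(M, b, ac)` for any such form. -/
theorem stmt7 (M Δ R R' a b c : ℤ) (hM : 1 ≤ M)
    (hR : (4 * M) ∣ (R^2 - Δ)) (hR' : (4 * M) ∣ (R'^2 - Δ))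
    (hcong : (2 * M) ∣ (R - R'))
    (hdisc : b^2 - 4 * (a * M) * c = Δ) (hb : (2 * M) ∣ (b - R))
    (hprim : Int.gcd (Int.gcd a b : ℤ) c = 1) :
    Int.gcd (Int.gcd M b : ℤ) (a * c) = Int.gcd (Int.gcd M R : ℤ) ((R^2 - Δ) / (4 * M)) ∧
    Int.gcd (Int.gcd M R : ℤ) ((R^2 - Δ) / (4 * M))
      = Int.gcd (Int.gcd M R' : ℤ) ((R'^2 - Δ) / (4 * M)) := by
  have hMne : M ≠ 0 := by omega
  have h4M : (4 * M) ≠ 0 := by simp [hMne]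
  have hbdisc : b^2 - Δ = 4 * M * (a * c) := by linarith [hdisc]
  have hbdvd : (4 * M) ∣ (b^2 - Δ) := ⟨a * c, hbdisc⟩
  have hac : (b^2 - Δ) / (4 * M) = a * c := by rw [hbdisc, Int.mul_ediv_cancel_left _ h4M]
  constructor
  · rw [← hac]
    exact Nat.dvd_antisymm (stmt7_aux M Δ b R hMne hbdvd hb)
      (stmt7_aux M Δ R b hMne hR (by have := dvd_neg.mpr hb; simpa using this))
  · exact Nat.dvd_antisymm (stmt7_aux M Δ R R' hMne hR hcong)
      (stmt7_aux M Δ R' R hMne hR' (by have := dvd_neg.mpr hcong; simpa using this))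
end

section
/- Let N ≥ 1, p an odd prime with p ∤ N, and Δ a discriminant with p | Δ. Let ϱ' ∈ R_{Np}(Δ) and ϱ ∈ R_N(Δ) its image under reduction, represented by a common integer R. Then: (i) if p^2 ∤ Δ, then gcd(Np, R, (R^2−Δ)/(4Np)) = gcd(N, R, (R^2−Δ)/(4N)); (ii) if p^2 | Δ, then gcd(Np, R, (R^2−Δ)/(4Np)) = p · gcd(N, R, (R^2−Δ)/(4N)). -/
/-- Comparison of the invariants `m_ϱ'` and `m_ϱ` at levels `Np` and `N`:
for `p` an odd prime, `p ∤ N`, `p ∣ Δ`, and `R` an integer with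
`R² ≡ Δ (mod 4Np)`: (i) if `p² ∤ Δ` then
`gcd(Np, R, (R²−Δ)/(4Np)) = gcd(N, R, (R²−Δ)/(4N))`; (ii) if `p² | Δ` then
`gcd(Np, R, (R²−Δ)/(4Np)) = p · gcd(N, R, (R²−Δ)/(4N))`. -/
theorem stmt11 (N Δ R : ℤ) (p : ℕ) (hN : 1 ≤ N) (hp : p.Prime) (hodd : Odd p)
    (hpN : ¬ (p : ℤ) ∣ N) (hpΔ : (p : ℤ) ∣ Δ)
    (hR : (4 * (N * (p : ℤ))) ∣ (R^2 - Δ)) :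
    (¬ ((p : ℤ)^2 ∣ Δ) →
      Int.gcd (Int.gcd (N * (p : ℤ)) R : ℤ) ((R^2 - Δ) / (4 * (N * (p : ℤ))))
        = Int.gcd (Int.gcd N R : ℤ) ((R^2 - Δ) / (4 * N))) ∧
    (((p : ℤ)^2 ∣ Δ) →
      Int.gcd (Int.gcd (N * (p : ℤ)) R : ℤ) ((R^2 - Δ) / (4 * (N * (p : ℤ))))
        = p * Int.gcd (Int.gcd N R : ℤ) ((R^2 - Δ) / (4 * N))) := by
  have hpz : (p : ℤ) ≠ 0 := by exact_mod_cast hp.ne_zero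
  have hNz : N ≠ 0 := by omega
  have h4Np : (4 * (N * (p : ℤ))) ≠ 0 := by
    simp [hNz, hpz, hp.ne_zero]
  have h4N : (4 : ℤ) * N ≠ 0 := by simp [hNz]
  obtain ⟨q, hq⟩ := hR
  have e1 : (R^2 - Δ) / (4 * (N * (p : ℤ))) = q := by
    rw [hq, Int.mul_ediv_cancel_left _ h4Np]
  have e2 : (R^2 - Δ) / (4 * N) = (p : ℤ) * q := by
    have : R^2 - Δ = 4 * N * ((p : ℤ) * q) := by rw [hq]; ring
    rw [this, Int.mul_ediv_cancel_left _ h4N]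
  rw [e1, e2]
  have hPZ : Prime (p : ℤ) := Nat.prime_iff_prime_int.mp hp
  -- p ∣ R
  have hpR : (p : ℤ) ∣ R := by
    have h1 : (p : ℤ) ∣ R ^ 2 := by
      have : R ^ 2 = (R ^ 2 - Δ) + Δ := by ring
      rw [this]
      exact dvd_add (dvd_trans ⟨4 * N, by ring⟩ ⟨q, hq⟩) hpΔ
    exact hPZ.dvd_of_dvd_pow h1
  have hp4 : ¬ (p : ℤ) ∣ 4 := by
    intro h
    have : (p : ℤ) ∣ 2 := by
      have : (4 : ℤ) = 2 ^ 2 := by norm_num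
      exact hPZ.dvd_of_dvd_pow (by rw [← this]; exact h)
    have hp2 : p ∣ 2 := by exact_mod_cast this
    have := (Nat.prime_dvd_prime_iff_eq hp Nat.prime_two).mp hp2
    rw [this] at hodd
    exact (Nat.not_odd_iff_even.mpr even_two) hodd
  -- key equivalence: p ∣ q ↔ p² ∣ Δ
  have hkey : (p : ℤ) ∣ q ↔ (p : ℤ)^2 ∣ Δ := by
    constructor
    · rintro ⟨c, rfl⟩
      have hΔ : Δ = R ^ 2 - 4 * (N * (p : ℤ)) * ((p : ℤ) * c) := by
        rw [← hq]; ring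
      rw [hΔ]
      exact dvd_sub (pow_dvd_pow_of_dvd hpR 2) ⟨4 * N * c, by ring⟩
    · intro h2
      have hdvd : (p : ℤ) ^ 2 ∣ (p : ℤ) * (4 * N * q) := by
        have : (p : ℤ) * (4 * N * q) = R ^ 2 - Δ := by rw [hq]; ring
        rw [this]
        exact dvd_sub (pow_dvd_pow_of_dvd hpR 2) h2
      rw [sq] at hdvd
      have h4Nq : (p : ℤ) ∣ 4 * N * q := (mul_dvd_mul_iff_left hpz).mp hdvd
      rcases (hPZ.dvd_mul.mp h4Nq) with h | h
      · rcases hPZ.dvd_mul.mp h with h' | h'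
        · exact absurd h' hp4
        · exact absurd h' hpN
      · exact h
  -- move to ℕ
  have habs : ∀ z : ℤ, ((p : ℤ) ∣ z) ↔ p ∣ z.natAbs := by
    intro z
    rw [← Int.natAbs_dvd_natAbs, Int.natAbs_natCast]
  have hpn : ¬ p ∣ N.natAbs := fun h => hpN ((habs N).mpr h)
  have hpr : p ∣ R.natAbs := (habs R).mp hpR
  set n := N.natAbs
  set r := R.natAbs
  set qn := q.natAbs
  have hgoal1 : Int.gcd (↑(Int.gcd (N * (p : ℤ)) R)) q = Nat.gcd (Nat.gcd (n * p) r) qn := by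
    simp [Int.gcd, Int.natAbs_mul]
    rfl
  have hgoal2 : Int.gcd (↑(Int.gcd N R)) ((p : ℤ) * q) = Nat.gcd (Nat.gcd n r) (p * qn) := by
    simp [Int.gcd, Int.natAbs_mul]
    rfl
  rw [hgoal1, hgoal2]
  have cnr : Nat.Coprime p (Nat.gcd n r) :=
    (hp.coprime_iff_not_dvd).mpr (fun h => hpn (h.trans (Nat.gcd_dvd_left _ _)))
  constructor
  · intro hnot
    have hnpq : ¬ p ∣ qn := fun h => hnot (hkey.mp ((habs q).mpr h))
    have crq : Nat.Coprime p (Nat.gcd r qn) :=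
      (hp.coprime_iff_not_dvd).mpr (fun h => hnpq (h.trans (Nat.gcd_dvd_right _ _)))
    rw [Nat.gcd_assoc, Nat.Coprime.gcd_mul_right_cancel _ crq, ← Nat.gcd_assoc,
      Nat.Coprime.gcd_mul_left_cancel_right _ cnr]
  · intro h2
    have hpq : p ∣ qn := (habs q).mp (hkey.mpr h2)
    obtain ⟨r', hr'⟩ := hpr
    obtain ⟨q', hq'⟩ := hpq
    rw [hr', hq']
    have lhs : Nat.gcd (n * p) (p * r') = Nat.gcd n r' * p := by
      rw [mul_comm p r', Nat.gcd_mul_right]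
    rw [lhs, mul_comm p q', Nat.gcd_mul_right]
    have cnr' : Nat.Coprime p (Nat.gcd n r') :=
      (hp.coprime_iff_not_dvd).mpr (fun h => hpn (h.trans (Nat.gcd_dvd_left _ _)))
    have cpn : Nat.Coprime p n := (hp.coprime_iff_not_dvd).mpr hpn
    rw [Nat.Coprime.gcd_mul_left_cancel_right _ cpn,
      Nat.Coprime.gcd_mul_left_cancel_right _ cnr',
      Nat.Coprime.gcd_mul_right_cancel_right _ cnr', mul_comm]
end

section
/- Let N, N_0, Δ, p be as follows: N ≥ 1 with N_0 | N, p an odd prime with p ∤ N, p | Δ and p^2 ∤ Δ. Then the map [aNp, b, c] ↦ [(ap)N, b, c] (the identity on forms) induces a bijection L_{Np}(N_0^2 Δ)/Γ_0(Np) → L_N(N_0^2 Δ)/Γ_0(N), where L_M(D) denotes the set of forms [A, b, c] of discriminant D with M | A and gcd(N_0, c) = 1. -/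
/-- Action of a 2×2 integer matrix on an integral binary quadratic form
`(A, b, c)`, given by `(Q∘γ)(X,Y) = Q((X,Y)·γᵀ)`. -/
def actQ (g : Matrix (Fin 2) (Fin 2) ℤ) (q : ℤ × ℤ × ℤ) : ℤ × ℤ × ℤ :=
  (q.1 * (g 0 0)^2 + q.2.1 * (g 0 0) * (g 1 0) + q.2.2 * (g 1 0)^2,
   2*q.1*(g 0 0)*(g 0 1) + q.2.1*((g 0 0)*(g 1 1) + (g 0 1)*(g 1 0)) + 2*q.2.2*(g 1 0)*(g 1 1),
   q.1 * (g 0 1)^2 + q.2.1 * (g 0 1) * (g 1 1) + q.2.2 * (g 1 1)^2)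

/-- `Lset N₀ M D` is the set of forms `[A, b, c]` of discriminant `D` with
`M ∣ A` and `gcd(N₀, c) = 1`. -/
def Lset (N₀ M D : ℤ) : Set (ℤ × ℤ × ℤ) :=
  {q | q.2.1^2 - 4 * q.1 * q.2.2 = D ∧ M ∣ q.1 ∧ IsCoprime N₀ q.2.2}

/-- `Γ₀(M)`-equivalence of integral binary quadratic forms. -/
def relQ (M : ℤ) (q q' : ℤ × ℤ × ℤ) : Prop :=
  ∃ g : Matrix (Fin 2) (Fin 2) ℤ, g.det = 1 ∧ M ∣ g 1 0 ∧ actQ g q = q'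

lemma actQ_mul (g h : Matrix (Fin 2) (Fin 2) ℤ) (q : ℤ × ℤ × ℤ) :
    actQ (g * h) q = actQ h (actQ g q) := by
  simp only [actQ, Matrix.mul_apply, Fin.sum_univ_two, Prod.mk.injEq]
  refine ⟨by ring, by ring, by ring⟩

lemma actQ_one (q : ℤ × ℤ × ℤ) : actQ 1 q = q := by
  simp [actQ, Matrix.one_apply]

lemma actQ_lit (A b c α β γ δ : ℤ) :
    actQ !![α, β; γ, δ] (A, b, c) =
      (A*α^2 + b*α*γ + c*γ^2,
       2*A*α*β + b*(α*δ + β*γ) + 2*c*γ*δ,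
       A*β^2 + b*β*δ + c*δ^2) := by
  simp only [actQ, Prod.mk.injEq]
  norm_num

lemma disc_actQ (g : Matrix (Fin 2) (Fin 2) ℤ) (q : ℤ × ℤ × ℤ) :
    (actQ g q).2.1^2 - 4*(actQ g q).1*(actQ g q).2.2
      = g.det^2 * (q.2.1^2 - 4*q.1*q.2.2) := by
  simp only [actQ, Matrix.det_fin_two]
  ring

lemma exists_coprime_lin (n b c : ℤ) (hn : n ≠ 0)
    (h : ∃ u v w : ℤ, u*n + v*b + w*c = 1) :
    ∃ t : ℤ, IsCoprime n (b*t + c) := by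
  obtain ⟨u, v, w, huvw⟩ := h
  set S : Finset ℕ := n.natAbs.primeFactors.filter (fun ℓ => ¬ (ℓ:ℤ) ∣ c) with hS
  set T : ℤ := ∏ ℓ ∈ S, (ℓ:ℤ) with hT
  refine ⟨T, ?_⟩
  rw [Int.isCoprime_iff_gcd_eq_one]
  by_contra hg
  obtain ⟨ℓ, hℓp, hℓd⟩ := Nat.exists_prime_and_dvd hg
  have hℓn : (ℓ:ℤ) ∣ n :=
    dvd_trans (Int.natCast_dvd_natCast.2 hℓd) (Int.gcd_dvd_left _ _)
  have hℓbtc : (ℓ:ℤ) ∣ b * T + c :=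
    dvd_trans (Int.natCast_dvd_natCast.2 hℓd) (Int.gcd_dvd_right _ _)
  have hℓpz : Prime (ℓ:ℤ) := Int.prime_iff_natAbs_prime.2 (by simpa using hℓp)
  by_cases hc : (ℓ:ℤ) ∣ c
  · have hℓT : ¬ (ℓ:ℤ) ∣ T := by
      intro hd
      obtain ⟨m, hmS, hm⟩ := (Prime.dvd_finset_prod_iff hℓpz _).1 hd
      have hmp : m.Prime := (Nat.mem_primeFactors.1 (Finset.mem_filter.1 hmS).1).1
      have : ℓ = m := (Nat.prime_dvd_prime_iff_eq hℓp hmp).1 (Int.natCast_dvd_natCast.1 hm)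
      exact (Finset.mem_filter.1 hmS).2 (this ▸ hc)
    have hb : (ℓ:ℤ) ∣ b := by
      have h1 : (ℓ:ℤ) ∣ b * T := (dvd_add_right hc).mp (by rwa [add_comm] at hℓbtc)
      rcases hℓpz.dvd_mul.1 h1 with h' | h'
      · exact h'
      · exact absurd h' hℓT
    have h1 : (ℓ:ℤ) ∣ 1 :=
      huvw ▸ (dvd_add (dvd_add (hℓn.mul_left u) (hb.mul_left v)) (hc.mul_left w))
    exact hℓpz.not_unit (isUnit_of_dvd_one h1)
  · have hℓS : ℓ ∈ S := Finset.mem_filter.2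
      ⟨Nat.mem_primeFactors.2 ⟨hℓp, Int.natCast_dvd.1 hℓn, Int.natAbs_ne_zero.2 hn⟩, hc⟩
    have hℓT : (ℓ:ℤ) ∣ T := Finset.dvd_prod_of_mem _ hℓS
    exact hc ((dvd_add_right (hℓT.mul_left b)).mp hℓbtc)

/-- When `p` exactly divides `Δ` (and `p ∤ N`, `N₀ ∣ N`), the identity map on
forms induces a bijection `L_{Np}(N₀²Δ)/Γ₀(Np) → L_N(N₀²Δ)/Γ₀(N)`: two forms of
`L_{Np}(N₀²Δ)` are `Γ₀(N)`-equivalent iff they are `Γ₀(Np)`-equivalent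
(injectivity), and every form of `L_N(N₀²Δ)` is `Γ₀(N)`-equivalent to one of
`L_{Np}(N₀²Δ)` (surjectivity). -/
theorem stmt18 (N N₀ Δ : ℤ) (p : ℕ) (hN : 1 ≤ N) (hN₀ : N₀ ∣ N)
    (hp : p.Prime) (hodd : Odd p) (hpN : ¬ (p : ℤ) ∣ N)
    (hpΔ : (p : ℤ) ∣ Δ) (hp2Δ : ¬ (p : ℤ)^2 ∣ Δ) :
    (∀ q ∈ Lset N₀ (N * (p : ℤ)) (N₀^2 * Δ), ∀ q' ∈ Lset N₀ (N * (p : ℤ)) (N₀^2 * Δ),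
      (relQ N q q' ↔ relQ (N * (p : ℤ)) q q')) ∧
    (∀ q ∈ Lset N₀ N (N₀^2 * Δ), ∃ q' ∈ Lset N₀ (N * (p : ℤ)) (N₀^2 * Δ),
      relQ N q' q) := by
  have hpz : Prime ((p:ℕ) : ℤ) := Int.prime_iff_natAbs_prime.2 (by simpa using hp)
  have hp2 : ¬ ((p:ℕ):ℤ) ∣ 2 := by
    intro h
    have h2 : p ∣ 2 := by exact_mod_cast h
    have heq := (Nat.prime_dvd_prime_iff_eq hp Nat.prime_two).1 h2
    rw [Nat.odd_iff, heq] at hodd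
    norm_num at hodd
  have hpN₀ : ¬ ((p:ℕ):ℤ) ∣ N₀ := fun h => hpN (h.trans hN₀)
  have hcopN : IsCoprime ((p:ℕ):ℤ) N := hpz.irreducible.coprime_iff_not_dvd.2 hpN
  have hcopN₀ : IsCoprime ((p:ℕ):ℤ) N₀ := hpz.irreducible.coprime_iff_not_dvd.2 hpN₀
  -- key: if p ∣ A and disc = N₀²Δ then p ∣ b and p ∤ c
  have key : ∀ A b c : ℤ, (p:ℤ) ∣ A → b^2 - 4*A*c = N₀^2*Δ → ((p:ℤ) ∣ b ∧ ¬ (p:ℤ) ∣ c) := by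
    intro A b c hpA hdisc
    have hb2 : (p:ℤ) ∣ b^2 := by
      have hbe : b^2 = N₀^2*Δ + 4*A*c := by linarith
      rw [hbe]
      exact dvd_add (hpΔ.mul_left _) ((hpA.mul_left 4).mul_right c)
    have hb : (p:ℤ) ∣ b := hpz.dvd_of_dvd_pow hb2
    refine ⟨hb, fun hc => ?_⟩
    have hsq : ((p:ℤ))^2 ∣ N₀^2*Δ := by
      have h1 : ((p:ℤ))^2 ∣ b^2 := pow_dvd_pow_of_dvd hb 2
      have h2 : ((p:ℤ))^2 ∣ 4*A*c := by
        have : (p:ℤ)*(p:ℤ) ∣ (4*A)*c := mul_dvd_mul (hpA.mul_left 4) hc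
        simpa [sq] using this
      have hbe : N₀^2*Δ = b^2 - 4*A*c := hdisc.symm
      rw [hbe]
      exact dvd_sub h1 h2
    exact hp2Δ ((hcopN₀.pow).dvd_of_dvd_mul_left hsq)
  constructor
  · -- injectivity
    rintro ⟨A, b, c⟩ ⟨hdisc, hMA, hcc⟩ ⟨A', b', c'⟩ ⟨hdisc', hMA', hcc'⟩
    constructor
    · rintro ⟨g, hdet, hdvd, hact⟩
      have hpA : (p:ℤ) ∣ A := (dvd_mul_left _ _).trans hMA
      have hpA' : (p:ℤ) ∣ A' := (dvd_mul_left _ _).trans hMA'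
      obtain ⟨hpb, hpc⟩ := key A b c hpA hdisc
      have hA'eq : A * (g 0 0)^2 + b * (g 0 0) * (g 1 0) + c * (g 1 0)^2 = A' := by
        have := congrArg Prod.fst hact
        simpa [actQ] using this
      have hpcγ : (p:ℤ) ∣ c * (g 1 0)^2 := by
        have he : c * (g 1 0)^2 = A' - A*(g 0 0)^2 - b*(g 0 0)*(g 1 0) := by
          linear_combination hA'eq
        rw [he]
        exact dvd_sub (dvd_sub hpA' (hpA.mul_right _)) ((hpb.mul_right _).mul_right _)
      have hpγ : (p:ℤ) ∣ g 1 0 := by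
        rcases hpz.dvd_mul.1 hpcγ with h' | h'
        · exact absurd h' hpc
        · exact hpz.dvd_of_dvd_pow h'
      exact ⟨g, hdet, hcopN.symm.mul_dvd hdvd hpγ, hact⟩
    · rintro ⟨g, hdet, hdvd, hact⟩
      exact ⟨g, hdet, (dvd_mul_right N _).trans hdvd, hact⟩
  · -- surjectivity
    rintro ⟨A, b, c⟩ ⟨hdisc, hNA, hcc⟩
    by_cases hpA : (p:ℤ) ∣ A
    · exact ⟨(A, b, c), ⟨hdisc, hcopN.symm.mul_dvd hNA hpA, hcc⟩,
        ⟨1, Matrix.det_one, by simp, actQ_one _⟩⟩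
    · -- construct α ≡ 1 mod N with p ∣ 2Aα + bN
      have hp2A : ¬ ((p:ℕ):ℤ) ∣ 2*A := by
        intro h
        rcases hpz.dvd_mul.1 h with h' | h'
        · exact hp2 h'
        · exact hpA h'
      obtain ⟨u, v, hu⟩ := (hpz.irreducible.coprime_iff_not_dvd.2 hp2A).symm
      obtain ⟨x, y, hx⟩ := hcopN.symm
      set α : ℤ := (-b*N*u)*(x*N) + (1 - x*N) with hα
      have hαN : N ∣ α - 1 := ⟨(-b)*N*u*x - x, by rw [hα]; ring⟩
      have hpα : ((p:ℕ):ℤ) ∣ 2*A*α + b*N := by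
        refine ⟨b*N*y + b*N*x*N*v + 2*A*y, ?_⟩
        rw [hα]
        linear_combination (-b*N*x*N) * hu + (-(b*N+2*A)) * hx
      -- complete α, N to an SL₂ matrix
      have hαcop : IsCoprime α N := by
        obtain ⟨k, hk⟩ := hαN
        exact ⟨1, -k, by linear_combination hk⟩
      obtain ⟨d, e, hde⟩ := hαcop
      set δ : ℤ := d with hδ
      set β : ℤ := -e with hβ
      have hdet1 : α*δ - β*N = 1 := by rw [hδ, hβ]; linear_combination hde
      set A' : ℤ := A*α^2 + b*α*N + c*N^2 with hA'
      set b' : ℤ := 2*A*α*β + b*(α*δ + β*N) + 2*c*N*δ with hb'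
      set c' : ℤ := A*β^2 + b*β*δ + c*δ^2 with hc'
      -- p ∣ A'
      have hpA' : ((p:ℕ):ℤ) ∣ A' := by
        have h4 : ((p:ℕ):ℤ) ∣ 4*A*A' := by
          have he : 4*A*A' = (2*A*α + b*N)^2 - (N₀^2*Δ)*N^2 := by
            rw [hA']
            linear_combination (-N^2) * hdisc
          rw [he]
          exact dvd_sub (dvd_pow hpα (by norm_num)) (((hpΔ.mul_left _).mul_right _))
        rcases hpz.dvd_mul.1 h4 with h' | h'
        · rcases hpz.dvd_mul.1 h' with h'' | h''
          · exact absurd h'' (fun h => hp2 (hpz.dvd_of_dvd_pow (show ((p:ℕ):ℤ) ∣ 2^2 by norm_num [h''] )))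
          · exact absurd h'' hpA
        · exact h'
      have hNA' : N ∣ A' := by
        rw [hA']
        obtain ⟨k, hk⟩ := hNA
        have hk' : A = N * k := hk
        exact ⟨k*α^2 + b*α + c*N, by rw [hk']; ring⟩
      have hN₀A' : N₀ ∣ A' := hN₀.trans hNA'
      -- content condition
      have hcid : c = A'*β^2 - b'*(α*β) + c'*α^2 := by
        rw [hA', hb', hc']
        linear_combination (-(c*(α*δ - β*N) + c)) * hdet1
      have hN0ne : N₀ ≠ 0 := by
        intro h0
        rw [h0] at hN₀
        have : N = 0 := zero_dvd_iff.mp hN₀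
        omega
      obtain ⟨s, t', hst⟩ := hcc
      obtain ⟨k₀, hk₀⟩ := hN₀A'
      have hcomb : ∃ u' v' w' : ℤ, u'*N₀ + v'*b' + w'*c' = 1 := by
        refine ⟨s + t'*k₀*β^2, -(t'*α*β), t'*α^2, ?_⟩
        calc (s + t'*k₀*β^2)*N₀ + (-(t'*α*β))*b' + (t'*α^2)*c'
            = s*N₀ + t'*((N₀*k₀)*β^2 - b'*(α*β) + c'*α^2) := by ring
          _ = s*N₀ + t'*c := by rw [← hk₀, ← hcid]
          _ = 1 := hst
      obtain ⟨t, ht⟩ := exists_coprime_lin N₀ b' c' hN0ne hcomb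
      -- the final matrix
      set G : Matrix (Fin 2) (Fin 2) ℤ := !![α, α*t+β; N, N*t+δ] with hG
      set H : Matrix (Fin 2) (Fin 2) ℤ := !![N*t+δ, -(α*t+β); -N, α] with hH
      have hGH : G * H = 1 := by
        rw [hG, hH]
        ext i j
        fin_cases i <;> fin_cases j <;>
          simp [Matrix.mul_apply, Fin.sum_univ_two] <;>
          first
            | linear_combination hdet1
            | linear_combination -hdet1
            | linear_combination 2*hdet1
            | linear_combination -2*hdet1
            | ring
      have hdetG : G.det = 1 := by
        rw [hG]
        simp [Matrix.det_fin_two]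
        linear_combination hdet1
      have hdetH : H.det = 1 := by
        rw [hH]
        simp [Matrix.det_fin_two]
        linear_combination hdet1
      have hq'' : actQ G (A, b, c) =
          (A', 2*A'*t + b', A'*t^2 + b'*t + c') := by
        rw [hG, actQ_lit]
        rw [hA', hb', hc']
        refine Prod.ext (by ring) (Prod.ext (by ring) (by ring))
      refine ⟨actQ G (A, b, c), ⟨?_, ?_, ?_⟩, ⟨H, hdetH, ?_, ?_⟩⟩
      · rw [disc_actQ, hdetG, hdisc]; ring
      · rw [hq'']
        exact hcopN.symm.mul_dvd hNA' hpA'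
      · rw [hq'']
        have he : A'*t^2 + b'*t + c' = (b'*t + c') + N₀*(k₀*t^2) := by
          linear_combination (t^2)*hk₀
        show IsCoprime N₀ (A'*t^2 + b'*t + c')
        rw [he]
        exact ht.add_mul_left_right _
      · rw [hH]; simp
      · rw [← actQ_mul, hGH, actQ_one]
end
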